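/- arXiv:2510.00447 — 4 statements merged into one kernel-verified Lean document; each statement's English description precedes it below -/
import Mathlib

section
/- Let S_g : ℓ²(ℕ×ℕ) → ℓ²(ℤ×ℤ) be the unitary operator with (S_g a)(n,m) = a(g⁻¹(n,m)), so that S_g e_{α,β} = δ_{g(α,β)}. Then S_g ∘ H_T ∘ S_g⁻¹ = T', where T' is the bounded operator on ℓ²(ℤ×ℤ) determined on the standard basis (δ_{n,m}) by T'δ_{n,m} = u(n,m) + d(n,m), with u(n,m) = δ_{n+1,m−1} if n ≥ 0 and m ≥ 1; δ_{n+1,m+1} if n ≤ −1 and m ≥ 0; δ_{n+1,m+1} if n ≥ 0 and m ≤ −2; δ_{0,m} if n = −1 and m ≤ −1; δ_{n+1,m−1} if n ≤ −2 and m ≤ −1; and u(n,m) = 0 otherwise; and d(n,m) = δ_{n−1,m+1} if n ≥ 1 and m ≥ 0; δ_{n−1,m−1} if n ≤ 0 and m ≥ 1; δ_{n−1,m−1} if n ≥ 1 and m ≤ −1; δ_{−1,m} if n = 0 and m ≤ −1; δ_{n−1,m+1} if n ≤ −1 and m ≤ −2; and d(n,m) = 0 otherwise. -/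
/-- The map `g : ℕ×ℕ → ℤ×ℤ`,
`g(α,β) = ((α−β)/2, min(α,β))` if `α−β` is even, and
`g(α,β) = ((α−β−1)/2, −min(α,β)−1)` if `α−β` is odd.  It is a bijection. -/
def jjG (p : ℕ × ℕ) : ℤ × ℤ :=
  if Even ((p.1 : ℤ) - (p.2 : ℤ)) then
    (((p.1 : ℤ) - (p.2 : ℤ)) / 2, (min p.1 p.2 : ℤ))
  else
    (((p.1 : ℤ) - (p.2 : ℤ) - 1) / 2, -(min p.1 p.2 : ℤ) - 1)

/-- The tunneling operator `H_T` on `ℓ²(ℕ×ℕ)`, coordinate action: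
`(H_T a)(p,q) = a(p+1,q−1)·[q ≥ 1] + a(p−1,q+1)·[p ≥ 1]`;
equivalently `H_T e_{α,β} = e_{α−1,β+1}·[α ≥ 1] + e_{α+1,β−1}·[β ≥ 1]`. -/
def tunnel (a : ℕ × ℕ → ℂ) : ℕ × ℕ → ℂ := fun p =>
  (if 1 ≤ p.2 then a (p.1 + 1, p.2 - 1) else 0) +
  (if 1 ≤ p.1 then a (p.1 - 1, p.2 + 1) else 0)

/-- Standard basis vector `e_{α,β}` of `ℓ²(ℕ×ℕ)`. -/
def eNN (α β : ℕ) : ℕ × ℕ → ℂ := fun p => if p = (α, β) then 1 else 0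

/-- Standard basis vector `δ_{n,m}` of `ℓ²(ℤ×ℤ)`. -/
def deltaZZ (r : ℤ × ℤ) : ℤ × ℤ → ℂ := fun p => if p = r then 1 else 0

/-- The unitary `S_g`, i.e. precomposition with `g⁻¹`; in particular
`S_g e_{α,β} = δ_{g(α,β)}`. -/
noncomputable def Sg (a : ℕ × ℕ → ℂ) : ℤ × ℤ → ℂ := fun q => a (Function.invFun jjG q)

/-- `u(n,m)` : the "up" part of `T'` on the basis vector `δ_{n,m}`. -/
def uVec (r : ℤ × ℤ) : ℤ × ℤ → ℂ :=
  if 0 ≤ r.1 ∧ 1 ≤ r.2 then deltaZZ (r.1 + 1, r.2 - 1)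
  else if r.1 ≤ -1 ∧ 0 ≤ r.2 then deltaZZ (r.1 + 1, r.2 + 1)
  else if 0 ≤ r.1 ∧ r.2 ≤ -2 then deltaZZ (r.1 + 1, r.2 + 1)
  else if r.1 = -1 ∧ r.2 ≤ -1 then deltaZZ (0, r.2)
  else if r.1 ≤ -2 ∧ r.2 ≤ -1 then deltaZZ (r.1 + 1, r.2 - 1)
  else 0

/-- `d(n,m)` : the "down" part of `T'` on the basis vector `δ_{n,m}`. -/
def dVec (r : ℤ × ℤ) : ℤ × ℤ → ℂ :=
  if 1 ≤ r.1 ∧ 0 ≤ r.2 then deltaZZ (r.1 - 1, r.2 + 1)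
  else if r.1 ≤ 0 ∧ 1 ≤ r.2 then deltaZZ (r.1 - 1, r.2 - 1)
  else if 1 ≤ r.1 ∧ r.2 ≤ -1 then deltaZZ (r.1 - 1, r.2 - 1)
  else if r.1 = 0 ∧ r.2 ≤ -1 then deltaZZ (-1, r.2)
  else if r.1 ≤ -1 ∧ r.2 ≤ -2 then deltaZZ (r.1 - 1, r.2 + 1)
  else 0

def jjGinv (r : ℤ × ℤ) : ℕ × ℕ :=
  if 0 ≤ r.2 then
    if 0 ≤ r.1 then ((r.2 + 2 * r.1).toNat, r.2.toNat)
    else (r.2.toNat, (r.2 - 2 * r.1).toNat)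
  else
    if 0 ≤ r.1 then ((-r.2 + 2 * r.1).toNat, (-r.2 - 1).toNat)
    else ((-r.2 - 1).toNat, (-r.2 - 2 * r.1 - 2).toNat)

lemma jjG_left : Function.LeftInverse jjGinv jjG := by
  rintro ⟨a, b⟩
  simp only [jjG, jjGinv, Int.even_iff, Nat.cast_min]
  split_ifs <;> simp_all [Prod.ext_iff] <;> omega

lemma jjG_right : Function.RightInverse jjGinv jjG := by
  rintro ⟨n, m⟩
  simp only [jjG, jjGinv, Int.even_iff, Nat.cast_min]
  split_ifs <;> simp_all [Prod.ext_iff] <;> omega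

lemma invFun_jjG_eq_iff (q : ℤ × ℤ) (p : ℕ × ℕ) :
    Function.invFun jjG q = p ↔ q = jjG p := by
  have hinj := jjG_left.injective
  constructor
  · rintro rfl
    exact (Function.invFun_eq ⟨jjGinv q, jjG_right q⟩).symm
  · rintro rfl
    exact Function.leftInverse_invFun hinj p

lemma Sg_eNN (α β : ℕ) : Sg (eNN α β) = deltaZZ (jjG (α, β)) := by
  funext q
  simp only [Sg, eNN, deltaZZ, invFun_jjG_eq_iff]

lemma eNN_eq (g d : ℕ) (p : ℕ × ℕ) :
    eNN g d p = if p.1 = g ∧ p.2 = d then 1 else 0 := by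
  simp [eNN, Prod.ext_iff]

lemma tunnel_eNN (α β : ℕ) :
    tunnel (eNN α β) =
      (if 1 ≤ β then eNN (α + 1) (β - 1) else 0) +
      (if 1 ≤ α then eNN (α - 1) (β + 1) else 0) := by
  funext p
  obtain ⟨a, b⟩ := p
  simp only [tunnel, Pi.add_apply, eNN_eq, Pi.zero_apply, apply_ite (fun f : ℕ × ℕ → ℂ => f (a, b))]
  split_ifs <;> first | (exfalso; omega) | norm_num

lemma uVec_jjG (α β : ℕ) (hβ : 1 ≤ β) :
    uVec (jjG (α, β)) = deltaZZ (jjG (α + 1, β - 1)) := by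
  have h2 : ((β - 1 : ℕ) : ℤ) = (β : ℤ) - 1 := by omega
  simp only [jjG, uVec, Int.even_iff, Nat.cast_min, Nat.cast_add, Nat.cast_one, h2]
  split_ifs <;>
    first
      | rfl
      | omega
      | (exact congrArg deltaZZ (by simp only [Prod.ext_iff]; constructor <;> omega))

lemma uVec_jjG0 (α : ℕ) : uVec (jjG (α, 0)) = 0 := by
  simp only [jjG, uVec, Int.even_iff, Nat.cast_min]
  split_ifs <;> first | rfl | omega

lemma dVec_jjG (α β : ℕ) (hα : 1 ≤ α) :
    dVec (jjG (α, β)) = deltaZZ (jjG (α - 1, β + 1)) := by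
  have h1 : ((α - 1 : ℕ) : ℤ) = (α : ℤ) - 1 := by omega
  simp only [jjG, dVec, Int.even_iff, Nat.cast_min, Nat.cast_add, Nat.cast_one, h1]
  split_ifs <;>
    first
      | rfl
      | omega
      | (exact congrArg deltaZZ (by simp only [Prod.ext_iff]; constructor <;> omega))

lemma dVec_jjG0 (β : ℕ) : dVec (jjG (0, β)) = 0 := by
  simp only [jjG, dVec, Int.even_iff, Nat.cast_min]
  split_ifs <;> first | rfl | omega

/-- `S_g ∘ H_T ∘ S_g⁻¹ = T'`, where the bounded operator `T'` is
determined on the standard basis by `T' δ_{n,m} = u(n,m) + d(n,m)`.  Since both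
sides are bounded and `S_g e_{α,β} = δ_{g(α,β)}`, this is equivalent to the
basis identity `S_g (H_T e_{α,β}) = u(g(α,β)) + d(g(α,β))` for all `α, β`. -/
theorem stmt4 (α β : ℕ) :
    Sg (tunnel (eNN α β)) = uVec (jjG (α, β)) + dVec (jjG (α, β)) := by
  have hadd : ∀ a b : (ℕ × ℕ → ℂ), Sg (a + b) = Sg a + Sg b := fun a b => rfl
  rw [tunnel_eNN, hadd]
  congr 1
  · rcases Nat.eq_zero_or_pos β with hβ | hβ
    · subst hβ
      rw [uVec_jjG0]
      simp only [if_neg (by omega : ¬ (1 ≤ 0))]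
      rfl
    · rw [if_pos (by omega : 1 ≤ β), Sg_eNN, uVec_jjG α β (by omega)]
  · rcases Nat.eq_zero_or_pos α with hα | hα
    · subst hα
      rw [dVec_jjG0]
      simp only [if_neg (by omega : ¬ (1 ≤ 0))]
      rfl
    · rw [if_pos (by omega : 1 ≤ α), Sg_eNN, dVec_jjG α β (by omega)]
end

section
/- Let f : ℕ×ℕ → ℤ×ℕ, f(α,β) = (α−β, min(α,β)) (a bijection), let S_f : ℓ²(ℕ×ℕ) → ℓ²(ℤ×ℕ) be the unitary with (S_f a)(n,m) = a(f⁻¹(n,m)), and set H_T^f = S_f ∘ H_T ∘ S_f⁻¹. If a ∈ ℓ²(ℤ×ℕ) vanishes at every index (n,m) with n odd, then H_T^f a vanishes at every index (n,m) with n odd; and if a vanishes at every index (n,m) with n even, then H_T^f a vanishes at every index (n,m) with n even. Hence H_T^f is reduced by the two closed subspaces of ℓ²(ℤ×ℕ) consisting of elements supported on even, respectively odd, first coordinate. -/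
/-- The folding map `f : ℕ×ℕ → ℤ×ℕ`, `f(α,β) = (α − β, min(α,β))`. -/
def jjF (p : ℕ × ℕ) : ℤ × ℕ := ((p.1 : ℤ) - (p.2 : ℤ), min p.1 p.2)

/-- The inverse of `f`. -/
def jjFinv (q : ℤ × ℕ) : ℕ × ℕ :=
  if 0 ≤ q.1 then (q.2 + q.1.toNat, q.2) else (q.2, q.2 + (-q.1).toNat)

/-- `S_f a = a ∘ f⁻¹`. -/
def Sf (a : ℕ × ℕ → ℂ) : ℤ × ℕ → ℂ := fun q => a (jjFinv q)

/-- `S_f⁻¹ b = b ∘ f`. -/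
def SfInv (b : ℤ × ℕ → ℂ) : ℕ × ℕ → ℂ := fun p => b (jjF p)

/-- `H_T^f = S_f ∘ H_T ∘ S_f⁻¹`. -/
def tunnelF (b : ℤ × ℕ → ℂ) : ℤ × ℕ → ℂ := Sf (tunnel (SfInv b))

set_option linter.unusedTactic false in
lemma tunnelF_parity (P : ℤ → Prop) (hP : ∀ k, P k → P (k+2)) (hP' : ∀ k, P k → P (k-2))
    (a : ℤ × ℕ → ℂ) (ha : ∀ n m, P n → a (n,m) = 0) (n : ℤ) (m : ℕ) (hn : P n) :
    tunnelF a (n,m) = 0 := by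
  have hz : ∀ x : ℤ, ∀ y : ℕ, (x = n + 2 ∨ x = n - 2) → a (x, y) = 0 := by
    rintro x y (rfl|rfl)
    exacts [ha _ _ (hP n hn), ha _ _ (hP' n hn)]
  unfold tunnelF Sf tunnel SfInv jjFinv jjF
  split_ifs with h h1 h2 <;> simp_all <;>
  push_cast [Int.toNat_of_nonneg, h] <;>
  first
  | (rw [hz _ _ (by omega), hz _ _ (by omega)]; ring)
  | exact hz _ _ (by omega)

/-- `H_T^f` preserves the subspaces supported on even, resp. odd,
first coordinate; hence it is reduced by these two subspaces. -/
theorem stmt6 :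
    (∀ a : ℤ × ℕ → ℂ, (∀ (n : ℤ) (m : ℕ), Odd n → a (n, m) = 0) →
      ∀ (n : ℤ) (m : ℕ), Odd n → tunnelF a (n, m) = 0) ∧
    (∀ a : ℤ × ℕ → ℂ, (∀ (n : ℤ) (m : ℕ), Even n → a (n, m) = 0) →
      ∀ (n : ℤ) (m : ℕ), Even n → tunnelF a (n, m) = 0) := by
  constructor
  · intro a ha n m hn
    exact tunnelF_parity Odd (fun k ⟨t, ht⟩ => ⟨t + 1, by omega⟩)
      (fun k ⟨t, ht⟩ => ⟨t - 1, by omega⟩) a ha n m hn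
  · intro a ha n m hn
    exact tunnelF_parity Even (fun k ⟨t, ht⟩ => ⟨t + 1, by omega⟩)
      (fun k ⟨t, ht⟩ => ⟨t - 1, by omega⟩) a ha n m hn
end

section
/- Let k ≥ 2 be an integer and let a₀ ∈ ℂ and a_n⁺, a_n⁻ ∈ ℂ for n = 1,…,k. Set ψ = Σ_{n=1}^{k} a_n⁺ e_{n,k−n} + Σ_{n=1}^{k} a_n⁻ e_{−n,k−n} + a₀ e_{0,k} ∈ H. Then, as elements of H, H_{S¹,T} ψ (θ₁,θ₂) = a_k⁻ e^{i(θ₁+θ₂)} e^{−ikθ₁} + a_k⁺ e^{−i(θ₁−θ₂)} e^{ikθ₁} + 2cos(θ₁) a₀ e^{i(k−1)θ₂} + 2cos(θ₁+θ₂) Σ_{n=1}^{k−1} a_n⁻ e^{−inθ₁} e^{i(k−n)θ₂} + 2cos(θ₁−θ₂) Σ_{n=1}^{k−1} a_n⁺ e^{inθ₁} e^{i(k−n)θ₂}. -/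
noncomputable section

/-- Fourier coefficient model of `L²((ℝ/2πℤ)²)`: trigonometric polynomials and more
general elements are described by their coefficient families `c : ℤ×ℤ → ℂ`,
`c ↔ Σ c(n,m) e^{i(nθ₁+mθ₂)}`. -/
abbrev Coef := (ℤ × ℤ) → ℂ

/-- The projection `P¹_M` (restriction of the first Fourier index to `M`). -/
def proj1 (S : ℤ → Prop) [DecidablePred S] (c : Coef) : Coef := fun p =>
  if S p.1 then c p else 0

/-- The projection `P²_M` (restriction of the second Fourier index to `M`). -/
def proj2 (S : ℤ → Prop) [DecidablePred S] (c : Coef) : Coef := fun p =>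
  if S p.2 then c p else 0

/-- Multiplication by `e^{i(aθ₁+bθ₂)}`, i.e. the shift of Fourier coefficients. -/
def Emul (a b : ℤ) (c : Coef) : Coef := fun p => c (p.1 - a, p.2 - b)

/-- `A₀ = E_{1,1}P¹_{(−∞,−1]} + E_{−1,1}P¹_{[1,∞)}`. -/
def opA0 (c : Coef) : Coef :=
  Emul 1 1 (proj1 (fun n => n ≤ -1) c) + Emul (-1) 1 (proj1 (fun n => 1 ≤ n) c)

/-- `A₊ = E_{−1,−1}P¹_{(−∞,0]} + E_{−1,1}P¹_{[1,∞)} + E_{1,1}P¹_{(−∞,−1]} + E_{1,−1}P¹_{[0,∞)}`. -/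
def opAplus (c : Coef) : Coef :=
  Emul (-1) (-1) (proj1 (fun n => n ≤ 0) c) + Emul (-1) 1 (proj1 (fun n => 1 ≤ n) c)
    + Emul 1 1 (proj1 (fun n => n ≤ -1) c) + Emul 1 (-1) (proj1 (fun n => 0 ≤ n) c)

/-- `A₋₁ = E_{1,−1}P¹_{(−∞,−2]} + E_{1,0}P¹_{{−1}} + E_{−1,0}P¹_{{0}} + E_{−1,−1}P¹_{[1,∞)}`. -/
def opAm1 (c : Coef) : Coef :=
  Emul 1 (-1) (proj1 (fun n => n ≤ -2) c) + Emul 1 0 (proj1 (fun n => n = -1) c)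
    + Emul (-1) 0 (proj1 (fun n => n = 0) c) + Emul (-1) (-1) (proj1 (fun n => 1 ≤ n) c)

/-- `A₋ = E_{−1,1}P¹_{(−∞,−1]} + E_{−1,0}P¹_{{0}} + E_{−1,−1}P¹_{[1,∞)}
       + E_{1,−1}P¹_{(−∞,−2]} + E_{1,0}P¹_{{−1}} + E_{1,1}P¹_{[0,∞)}`. -/
def opAminus (c : Coef) : Coef :=
  Emul (-1) 1 (proj1 (fun n => n ≤ -1) c) + Emul (-1) 0 (proj1 (fun n => n = 0) c)
    + Emul (-1) (-1) (proj1 (fun n => 1 ≤ n) c) + Emul 1 (-1) (proj1 (fun n => n ≤ -2) c)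
    + Emul 1 0 (proj1 (fun n => n = -1) c) + Emul 1 1 (proj1 (fun n => 0 ≤ n) c)

/-- The tunneling operator
`H_{S¹,T} = A₀ P²_{{0}} + A₊ P²_{[1,∞)} + A₋₁ P²_{{−1}} + A₋ P²_{(−∞,−2]}`. -/
def tunnelS1 (c : Coef) : Coef :=
  opA0 (proj2 (fun m => m = 0) c) + opAplus (proj2 (fun m => 1 ≤ m) c)
    + opAm1 (proj2 (fun m => m = -1) c) + opAminus (proj2 (fun m => m ≤ -2) c)

/-- Fourier coefficient of the single exponential `e_{n,m}(θ₁,θ₂) = e^{i(nθ₁+mθ₂)}`. -/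
def cdelta (n m : ℤ) : Coef := fun p => if p = (n, m) then 1 else 0

/-- The trigonometric polynomial with coefficients `c`, as a function of `(θ₁, θ₂)`. -/
def realize (c : Coef) (θ₁ θ₂ : ℝ) : ℂ :=
  ∑ᶠ p : ℤ × ℤ, c p * Complex.exp (Complex.I * ((p.1 : ℂ) * (θ₁ : ℂ) + (p.2 : ℂ) * (θ₂ : ℂ)))

section Aux

open Function

lemma proj1_add (S : ℤ → Prop) [DecidablePred S] (c d : Coef) :
    proj1 S (c + d) = proj1 S c + proj1 S d := by
  funext p; simp only [proj1, Pi.add_apply]; split_ifs <;> simp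

lemma proj2_add (S : ℤ → Prop) [DecidablePred S] (c d : Coef) :
    proj2 S (c + d) = proj2 S c + proj2 S d := by
  funext p; simp only [proj2, Pi.add_apply]; split_ifs <;> simp

lemma Emul_add (a b : ℤ) (c d : Coef) : Emul a b (c + d) = Emul a b c + Emul a b d := by
  funext p; simp [Emul]

lemma proj1_smul (S : ℤ → Prop) [DecidablePred S] (t : ℂ) (c : Coef) :
    proj1 S (t • c) = t • proj1 S c := by
  funext p; simp only [proj1, Pi.smul_apply, smul_eq_mul]; split_ifs <;> simp

lemma proj2_smul (S : ℤ → Prop) [DecidablePred S] (t : ℂ) (c : Coef) :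
    proj2 S (t • c) = t • proj2 S c := by
  funext p; simp only [proj2, Pi.smul_apply, smul_eq_mul]; split_ifs <;> simp

lemma Emul_smul (a b : ℤ) (t : ℂ) (c : Coef) : Emul a b (t • c) = t • Emul a b c := by
  funext p; simp [Emul]

lemma tunnelS1_add (c d : Coef) : tunnelS1 (c + d) = tunnelS1 c + tunnelS1 d := by
  simp only [tunnelS1, opA0, opAplus, opAm1, opAminus, proj1_add, proj2_add, Emul_add]
  funext p; simp only [Pi.add_apply]; ring

lemma tunnelS1_smul (t : ℂ) (c : Coef) : tunnelS1 (t • c) = t • tunnelS1 c := by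
  simp only [tunnelS1, opA0, opAplus, opAm1, opAminus, proj1_smul, proj2_smul, Emul_smul]
  funext p; simp only [Pi.add_apply, Pi.smul_apply, smul_eq_mul]; ring

/-- `tunnelS1` as a linear map. -/
def tunnelL : Coef →ₗ[ℂ] Coef where
  toFun := tunnelS1
  map_add' := tunnelS1_add
  map_smul' := tunnelS1_smul

lemma proj1_cdelta (S : ℤ → Prop) [DecidablePred S] (n m : ℤ) :
    proj1 S (cdelta n m) = if S n then cdelta n m else 0 := by
  funext p
  by_cases hp : p = (n, m)
  · subst hp; simp only [proj1]; split_ifs <;> simp [cdelta]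
  · simp only [proj1]; split_ifs <;> simp [cdelta, hp]

lemma proj2_cdelta (S : ℤ → Prop) [DecidablePred S] (n m : ℤ) :
    proj2 S (cdelta n m) = if S m then cdelta n m else 0 := by
  funext p
  by_cases hp : p = (n, m)
  · subst hp; simp only [proj2]; split_ifs <;> simp [cdelta]
  · simp only [proj2]; split_ifs <;> simp [cdelta, hp]

lemma Emul_cdelta (a b n m : ℤ) : Emul a b (cdelta n m) = cdelta (n + a) (m + b) := by
  funext p; simp only [Emul, cdelta, Prod.ext_iff, Prod.mk.injEq]
  congr 1; simp only [eq_iff_iff]; omega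

lemma proj1_zero (S : ℤ → Prop) [DecidablePred S] : proj1 S (0 : Coef) = 0 := by
  funext p; simp [proj1]

lemma proj2_zero (S : ℤ → Prop) [DecidablePred S] : proj2 S (0 : Coef) = 0 := by
  funext p; simp [proj2]

lemma Emul_zero (a b : ℤ) : Emul a b (0 : Coef) = 0 := by
  funext p; simp [Emul]

end Aux
section Aux2

lemma tunnel_cdelta_pp (n m : ℤ) (hn : 1 ≤ n) (hm : 1 ≤ m) :
    tunnelS1 (cdelta n m) = cdelta (n - 1) (m + 1) + cdelta (n + 1) (m - 1) := by
  have h0 : ¬ (m = 0) := by omega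
  have h1 : ¬ (m = -1) := by omega
  have h2 : ¬ (m ≤ -2) := by omega
  have h3 : ¬ (n ≤ 0) := by omega
  have h4 : ¬ (n ≤ -1) := by omega
  have h5 : (0:ℤ) ≤ n := by omega
  simp [tunnelS1, opA0, opAplus, opAm1, opAminus, proj2_cdelta, proj1_cdelta, Emul_cdelta,
    Emul_zero, proj1_zero, h0, h1, h2, h3, h4, h5, hn, hm, sub_eq_add_neg]

lemma tunnel_cdelta_mp (n m : ℤ) (hn : n ≤ -1) (hm : 1 ≤ m) :
    tunnelS1 (cdelta n m) = cdelta (n + 1) (m + 1) + cdelta (n - 1) (m - 1) := by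
  have h0 : ¬ (m = 0) := by omega
  have h1 : ¬ (m = -1) := by omega
  have h2 : ¬ (m ≤ -2) := by omega
  have h3 : (n ≤ 0) := by omega
  have h4 : ¬ (1 ≤ n) := by omega
  have h5 : ¬ ((0:ℤ) ≤ n) := by omega
  simp [tunnelS1, opA0, opAplus, opAm1, opAminus, proj2_cdelta, proj1_cdelta, Emul_cdelta,
    Emul_zero, proj1_zero, h0, h1, h2, h3, h4, h5, hn, hm, sub_eq_add_neg, add_comm]

lemma tunnel_cdelta_p0 (n : ℤ) (hn : 1 ≤ n) :
    tunnelS1 (cdelta n 0) = cdelta (n - 1) 1 := by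
  have h4 : ¬ (n ≤ -1) := by omega
  simp [tunnelS1, opA0, opAplus, opAm1, opAminus, proj2_cdelta, proj1_cdelta, Emul_cdelta,
    Emul_zero, proj1_zero, h4, hn, sub_eq_add_neg]

lemma tunnel_cdelta_m0 (n : ℤ) (hn : n ≤ -1) :
    tunnelS1 (cdelta n 0) = cdelta (n + 1) 1 := by
  have h4 : ¬ (1 ≤ n) := by omega
  simp [tunnelS1, opA0, opAplus, opAm1, opAminus, proj2_cdelta, proj1_cdelta, Emul_cdelta,
    Emul_zero, proj1_zero, h4, hn, sub_eq_add_neg]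

lemma tunnel_cdelta_0p (m : ℤ) (hm : 1 ≤ m) :
    tunnelS1 (cdelta 0 m) = cdelta (-1) (m - 1) + cdelta 1 (m - 1) := by
  have h0 : ¬ (m = 0) := by omega
  have h1 : ¬ (m = -1) := by omega
  have h2 : ¬ (m ≤ -2) := by omega
  simp [tunnelS1, opA0, opAplus, opAm1, opAminus, proj2_cdelta, proj1_cdelta, Emul_cdelta,
    Emul_zero, proj1_zero, h0, h1, h2, hm, sub_eq_add_neg]

end Aux2
section Aux3

open Function

/-- Support of the integrand of `realize` is controlled by the support of `c`. -/
lemma supp_integrand (c : Coef) (hc : (support c).Finite) (θ₁ θ₂ : ℝ) :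
    (support fun p : ℤ × ℤ =>
      c p * Complex.exp (Complex.I * ((p.1 : ℂ) * (θ₁ : ℂ) + (p.2 : ℂ) * (θ₂ : ℂ)))).Finite := by
  apply hc.subset
  intro p hp
  simp only [mem_support] at hp ⊢
  intro h; exact hp (by rw [h]; ring)

lemma realize_cdelta (n m : ℤ) (θ₁ θ₂ : ℝ) :
    realize (cdelta n m) θ₁ θ₂
      = Complex.exp (Complex.I * ((n : ℂ) * (θ₁ : ℂ) + (m : ℂ) * (θ₂ : ℂ))) := by
  unfold realize
  rw [finsum_eq_single _ ((n, m) : ℤ × ℤ)]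
  · simp [cdelta]
  · intro p hp; simp [cdelta, hp]

lemma realize_add (c d : Coef) (hc : (support c).Finite) (hd : (support d).Finite) (θ₁ θ₂ : ℝ) :
    realize (c + d) θ₁ θ₂ = realize c θ₁ θ₂ + realize d θ₁ θ₂ := by
  unfold realize
  rw [← finsum_add_distrib (supp_integrand c hc θ₁ θ₂) (supp_integrand d hd θ₁ θ₂)]
  apply finsum_congr; intro p
  simp [add_mul]

lemma realize_smul (t : ℂ) (c : Coef) (hc : (support c).Finite) (θ₁ θ₂ : ℝ) :
    realize (t • c) θ₁ θ₂ = t * realize c θ₁ θ₂ := by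
  unfold realize
  rw [mul_finsum _ _]
  apply finsum_congr; intro p
  simp [mul_assoc]

lemma realize_zero (θ₁ θ₂ : ℝ) : realize (0 : Coef) θ₁ θ₂ = 0 := by
  unfold realize; simp

lemma supp_cdelta (n m : ℤ) : (support (cdelta n m)).Finite := by
  apply (Set.finite_singleton ((n, m) : ℤ × ℤ)).subset
  intro p hp
  simp only [mem_support, cdelta] at hp
  by_contra h; simp_all

lemma supp_add {c d : Coef} (hc : (support c).Finite) (hd : (support d).Finite) :
    (support (c + d)).Finite :=
  (hc.union hd).subset (support_add c d)

lemma supp_smul (t : ℂ) {c : Coef} (hc : (support c).Finite) :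
    (support (t • c)).Finite := by
  apply hc.subset
  intro p hp
  simp only [mem_support, Pi.smul_apply, smul_eq_mul] at hp ⊢
  intro h; exact hp (by rw [h]; ring)

lemma supp_sum {ι : Type*} (s : Finset ι) (f : ι → Coef)
    (h : ∀ i ∈ s, (support (f i)).Finite) : (support (∑ i ∈ s, f i)).Finite := by
  classical
  induction s using Finset.cons_induction with
  | empty => simpa using Set.finite_empty
  | cons a s ha ih =>
    rw [Finset.sum_cons]
    exact supp_add (h a (Finset.mem_cons_self a s))
      (ih fun i hi => h i (Finset.mem_cons_of_mem hi))

lemma realize_sum {ι : Type*} (s : Finset ι) (f : ι → Coef)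
    (h : ∀ i ∈ s, (support (f i)).Finite) (θ₁ θ₂ : ℝ) :
    realize (∑ i ∈ s, f i) θ₁ θ₂ = ∑ i ∈ s, realize (f i) θ₁ θ₂ := by
  classical
  induction s using Finset.cons_induction with
  | empty => simp [realize_zero]
  | cons a s ha ih =>
    rw [Finset.sum_cons, Finset.sum_cons,
      realize_add _ _ (h a (Finset.mem_cons_self a s))
        (supp_sum s f fun i hi => h i (Finset.mem_cons_of_mem hi)),
      ih fun i hi => h i (Finset.mem_cons_of_mem hi)]

end Aux3
@[simp] lemma tunnelL_apply (c : Coef) : tunnelL c = tunnelS1 c := rfl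

/-- action of `H_{S¹,T}` on the fiber `L_{2k}`. -/
theorem stmt12 (k : ℤ) (hk : 2 ≤ k) (a0 : ℂ) (ap am : ℤ → ℂ) (θ₁ θ₂ : ℝ) :
    realize (tunnelS1 ((∑ n ∈ Finset.Icc (1 : ℤ) k, ap n • cdelta n (k - n))
        + (∑ n ∈ Finset.Icc (1 : ℤ) k, am n • cdelta (-n) (k - n))
        + a0 • cdelta 0 k)) θ₁ θ₂
      = am k * Complex.exp (Complex.I * ((θ₁ : ℂ) + (θ₂ : ℂ)))
            * Complex.exp (-(Complex.I * ((k : ℂ) * (θ₁ : ℂ))))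
        + ap k * Complex.exp (-(Complex.I * ((θ₁ : ℂ) - (θ₂ : ℂ))))
            * Complex.exp (Complex.I * ((k : ℂ) * (θ₁ : ℂ)))
        + 2 * Complex.cos (θ₁ : ℂ) * a0
            * Complex.exp (Complex.I * (((k : ℂ) - 1) * (θ₂ : ℂ)))
        + 2 * Complex.cos ((θ₁ : ℂ) + (θ₂ : ℂ))
            * ∑ n ∈ Finset.Icc (1 : ℤ) (k - 1), am n
                * Complex.exp (-(Complex.I * ((n : ℂ) * (θ₁ : ℂ))))
                * Complex.exp (Complex.I * (((k : ℂ) - (n : ℂ)) * (θ₂ : ℂ)))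
        + 2 * Complex.cos ((θ₁ : ℂ) - (θ₂ : ℂ))
            * ∑ n ∈ Finset.Icc (1 : ℤ) (k - 1), ap n
                * Complex.exp (Complex.I * ((n : ℂ) * (θ₁ : ℂ)))
                * Complex.exp (Complex.I * (((k : ℂ) - (n : ℂ)) * (θ₂ : ℂ))) := by
  classical
  set s : Finset ℤ := Finset.Icc (1 : ℤ) (k - 1) with hs
  have hins : Finset.Icc (1 : ℤ) k = insert k s := by ext x; simp [hs]; omega
  have hknot : k ∉ s := by simp [hs]
  -- Step 1: rewrite ψ with the top term split off
  have hψ : (∑ n ∈ Finset.Icc (1 : ℤ) k, ap n • cdelta n (k - n))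
        + (∑ n ∈ Finset.Icc (1 : ℤ) k, am n • cdelta (-n) (k - n))
        + a0 • cdelta 0 k
      = (ap k • cdelta k 0 + ∑ n ∈ s, ap n • cdelta n (k - n))
        + (am k • cdelta (-k) 0 + ∑ n ∈ s, am n • cdelta (-n) (k - n))
        + a0 • cdelta 0 k := by
    rw [hins, Finset.sum_insert hknot, Finset.sum_insert hknot, sub_self]
  -- Step 2: apply the operator
  have hs1 : ∀ n ∈ s, ap n • tunnelS1 (cdelta n (k - n))
      = ap n • (cdelta (n - 1) (k - n + 1) + cdelta (n + 1) (k - n - 1)) := by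
    intro n hn
    simp only [hs, Finset.mem_Icc] at hn
    rw [tunnel_cdelta_pp n (k - n) (by omega) (by omega)]
  have hs2 : ∀ n ∈ s, am n • tunnelS1 (cdelta (-n) (k - n))
      = am n • (cdelta (-n + 1) (k - n + 1) + cdelta (-n - 1) (k - n - 1)) := by
    intro n hn
    simp only [hs, Finset.mem_Icc] at hn
    rw [tunnel_cdelta_mp (-n) (k - n) (by omega) (by omega)]
  have hT : tunnelS1 ((ap k • cdelta k 0 + ∑ n ∈ s, ap n • cdelta n (k - n))
        + (am k • cdelta (-k) 0 + ∑ n ∈ s, am n • cdelta (-n) (k - n))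
        + a0 • cdelta 0 k)
      = (ap k • cdelta (k - 1) 1
          + ∑ n ∈ s, ap n • (cdelta (n - 1) (k - n + 1) + cdelta (n + 1) (k - n - 1)))
        + (am k • cdelta (-k + 1) 1
          + ∑ n ∈ s, am n • (cdelta (-n + 1) (k - n + 1) + cdelta (-n - 1) (k - n - 1)))
        + a0 • (cdelta (-1) (k - 1) + cdelta 1 (k - 1)) := by
    show tunnelL _ = _
    rw [map_add, map_add, map_add, map_add, map_sum, map_sum]
    simp only [map_smul, tunnelL_apply]
    rw [tunnel_cdelta_p0 k (by omega), tunnel_cdelta_m0 (-k) (by omega),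
      tunnel_cdelta_0p k (by omega), Finset.sum_congr rfl hs1, Finset.sum_congr rfl hs2]
  rw [hψ, hT]
  -- Step 3: realize everything
  have fc := supp_cdelta
  have f1 : ∀ n m n' m' : ℤ, (Function.support (cdelta n m + cdelta n' m')).Finite :=
    fun n m n' m' => supp_add (fc n m) (fc n' m')
  have fs1 : (Function.support (∑ n ∈ s,
      ap n • (cdelta (n - 1) (k - n + 1) + cdelta (n + 1) (k - n - 1)))).Finite :=
    supp_sum s _ (fun i _ => supp_smul _ (f1 _ _ _ _))
  have fs2 : (Function.support (∑ n ∈ s,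
      am n • (cdelta (-n + 1) (k - n + 1) + cdelta (-n - 1) (k - n - 1)))).Finite :=
    supp_sum s _ (fun i _ => supp_smul _ (f1 _ _ _ _))
  rw [realize_add _ _ (supp_add (supp_add (supp_smul _ (fc _ _)) fs1)
        (supp_add (supp_smul _ (fc _ _)) fs2)) (supp_smul _ (f1 _ _ _ _)),
    realize_add _ _ (supp_add (supp_smul _ (fc _ _)) fs1)
        (supp_add (supp_smul _ (fc _ _)) fs2),
    realize_add _ _ (supp_smul _ (fc _ _)) fs1,
    realize_add _ _ (supp_smul _ (fc _ _)) fs2,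
    realize_smul _ _ (fc _ _), realize_smul _ _ (fc _ _), realize_smul _ _ (f1 _ _ _ _),
    realize_add _ _ (fc _ _) (fc _ _),
    realize_sum s _ (fun i _ => supp_smul _ (f1 _ _ _ _)),
    realize_sum s _ (fun i _ => supp_smul _ (f1 _ _ _ _)),
    realize_cdelta, realize_cdelta, realize_cdelta, realize_cdelta]
  -- per-term realization inside sums
  have hr1 : ∀ n ∈ s, realize (ap n • (cdelta (n - 1) (k - n + 1) + cdelta (n + 1) (k - n - 1))) θ₁ θ₂
      = ap n * (Complex.exp (Complex.I * (((n : ℂ) - 1) * θ₁ + ((k : ℂ) - n + 1) * θ₂))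
          + Complex.exp (Complex.I * (((n : ℂ) + 1) * θ₁ + ((k : ℂ) - n - 1) * θ₂))) := by
    intro n _
    rw [realize_smul _ _ (f1 _ _ _ _), realize_add _ _ (fc _ _) (fc _ _),
      realize_cdelta, realize_cdelta]
    push_cast
    ring_nf
  have hr2 : ∀ n ∈ s, realize (am n • (cdelta (-n + 1) (k - n + 1) + cdelta (-n - 1) (k - n - 1))) θ₁ θ₂
      = am n * (Complex.exp (Complex.I * ((-(n : ℂ) + 1) * θ₁ + ((k : ℂ) - n + 1) * θ₂))
          + Complex.exp (Complex.I * ((-(n : ℂ) - 1) * θ₁ + ((k : ℂ) - n - 1) * θ₂))) := by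
    intro n _
    rw [realize_smul _ _ (f1 _ _ _ _), realize_add _ _ (fc _ _) (fc _ _),
      realize_cdelta, realize_cdelta]
    push_cast
    ring_nf
  rw [Finset.sum_congr rfl hr1, Finset.sum_congr rfl hr2]
  -- Step 4: algebra
  rw [Finset.mul_sum, Finset.mul_sum]
  have ec1 : ∀ n ∈ s, ap n * (Complex.exp (Complex.I * (((n : ℂ) - 1) * θ₁ + ((k : ℂ) - n + 1) * θ₂))
          + Complex.exp (Complex.I * (((n : ℂ) + 1) * θ₁ + ((k : ℂ) - n - 1) * θ₂)))
      = 2 * Complex.cos ((θ₁ : ℂ) - (θ₂ : ℂ)) * (ap n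
          * Complex.exp (Complex.I * ((n : ℂ) * (θ₁ : ℂ)))
          * Complex.exp (Complex.I * (((k : ℂ) - (n : ℂ)) * (θ₂ : ℂ)))) := by
    intro n _
    simp only [Complex.cos, ← Complex.exp_add]
    ring_nf
    simp only [mul_assoc, ← Complex.exp_add]
    ring_nf
  have ec2 : ∀ n ∈ s, am n * (Complex.exp (Complex.I * ((-(n : ℂ) + 1) * θ₁ + ((k : ℂ) - n + 1) * θ₂))
          + Complex.exp (Complex.I * ((-(n : ℂ) - 1) * θ₁ + ((k : ℂ) - n - 1) * θ₂)))
      = 2 * Complex.cos ((θ₁ : ℂ) + (θ₂ : ℂ)) * (am n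
          * Complex.exp (-(Complex.I * ((n : ℂ) * (θ₁ : ℂ))))
          * Complex.exp (Complex.I * (((k : ℂ) - (n : ℂ)) * (θ₂ : ℂ)))) := by
    intro n _
    simp only [Complex.cos, ← Complex.exp_add]
    ring_nf
    simp only [mul_assoc, ← Complex.exp_add]
    ring_nf
  rw [Finset.sum_congr rfl ec1, Finset.sum_congr rfl ec2]
  set S1 := ∑ n ∈ s, 2 * Complex.cos ((θ₁ : ℂ) - (θ₂ : ℂ)) * (ap n
      * Complex.exp (Complex.I * ((n : ℂ) * (θ₁ : ℂ)))
      * Complex.exp (Complex.I * (((k : ℂ) - (n : ℂ)) * (θ₂ : ℂ)))) with hS1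
  set S2 := ∑ n ∈ s, 2 * Complex.cos ((θ₁ : ℂ) + (θ₂ : ℂ)) * (am n
      * Complex.exp (-(Complex.I * ((n : ℂ) * (θ₁ : ℂ))))
      * Complex.exp (Complex.I * (((k : ℂ) - (n : ℂ)) * (θ₂ : ℂ)))) with hS2
  push_cast
  simp only [Complex.cos, ← Complex.exp_add]
  ring_nf
  simp only [mul_assoc, ← Complex.exp_add]
  ring_nf
end
end

section
/- For α, Φ ∈ ℝ define the bounded operator I_{S¹}(Φ) on H by I_{S¹}(Φ) = −α Σ_{i,j=1}^{4} M_{K_{ij}(Φ)} ∘ (P¹_{S_i} P²_{S_j}), where S₁ = (−∞,−2], S₂ = {−1}, S₃ = {0}, S₄ = [1,∞), M_{K} denotes multiplication by the function K, and K₁₁ = −2 sin(θ₁−Φ−θ₂), K₁₂ = i e^{i(θ₁−Φ−θ₂)}, K₁₃ = i e^{i(θ₁−Φ+θ₂)}, K₁₄ = −2 sin(θ₁−Φ+θ₂), K₂₁ = −i e^{−i(θ₁−Φ−θ₂)} + i e^{i(θ₁−Φ)}, K₂₂ = i e^{i(θ₁−Φ)}, K₂₃ = i e^{i(θ₁−Φ+θ₂)},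 K₂₄ = −2 sin(θ₁−Φ+θ₂), K₃₁ = −i e^{−i(θ₁−Φ)} + i e^{i(θ₁−Φ+θ₂)}, K₃₂ = i e^{−i(θ₁−Φ)}, K₃₃ = 0, K₃₄ = −i e^{−i(θ₁−Φ+θ₂)} + i e^{i(θ₁−Φ−θ₂)}, K₄₁ = −2 sin(θ₁−Φ+θ₂), K₄₂ = −i e^{−i(θ₁−Φ+θ₂)}, K₄₃ = −i e^{−i(θ₁−Φ−θ₂)}, K₄₄ = −2 sin(θ₁−Φ−θ₂). Then (Fraunhofer pattern): for every Ψ ≠ 0 and every ψ ∈ H, ∫_{−1/2}^{1/2} ⟨ψ, I_{S¹}(Ψx) ψ⟩ dx = (sin(Ψ/2)/(Ψ/2)) · ⟨ψ, I_{S¹}(0) ψ⟩; moreover, if ψ lies in the range of P¹_{{0}}P²_{{0}}, then ∫_{−1/2}^{1/2} ⟨ψ, I_{S¹}(Ψx) ψ⟩ dx = 0 for every Ψ ∈ ℝ. -/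
noncomputable section

/-- The block projection `P¹_S P²_T`. -/
def blk (S T : ℤ → Prop) [DecidablePred S] [DecidablePred T] (c : Coef) : Coef :=
  fun p => if S p.1 ∧ T p.2 then c p else 0

/-- The Josephson current `I_{S¹}(Φ) = −α Σ_{i,j} M_{K_{ij}(Φ)} ∘ (P¹_{S_i} P²_{S_j})`,
with `S₁ = (−∞,−2]`, `S₂ = {−1}`, `S₃ = {0}`, `S₄ = [1,∞)`, and the multipliers
`K_{ij}` of the statement, written out in terms of shifts of Fourier coefficients
(using `−2 sin x = i e^{ix} − i e^{−ix}`, `e^{±i(θ₁−Φ±θ₂)} = e^{∓iΦ} E_{±1,±1}`). -/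
def Icur (α Φ : ℝ) (c : Coef) : Coef :=
  let v : ℂ := Complex.I * Complex.exp (-(Complex.I * (Φ : ℂ)))
  let v' : ℂ := Complex.I * Complex.exp (Complex.I * (Φ : ℂ))
  (-(α : ℂ)) •
    ( -- K₁₁ = −2 sin(θ₁−Φ−θ₂)
      (v • Emul 1 (-1) (blk (fun n => n ≤ -2) (fun m => m ≤ -2) c)
        - v' • Emul (-1) 1 (blk (fun n => n ≤ -2) (fun m => m ≤ -2) c))
      -- K₁₂ = i e^{i(θ₁−Φ−θ₂)}
      + v • Emul 1 (-1) (blk (fun n => n ≤ -2) (fun m => m = -1) c)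
      -- K₁₃ = i e^{i(θ₁−Φ+θ₂)}
      + v • Emul 1 1 (blk (fun n => n ≤ -2) (fun m => m = 0) c)
      -- K₁₄ = −2 sin(θ₁−Φ+θ₂)
      + (v • Emul 1 1 (blk (fun n => n ≤ -2) (fun m => 1 ≤ m) c)
        - v' • Emul (-1) (-1) (blk (fun n => n ≤ -2) (fun m => 1 ≤ m) c))
      -- K₂₁ = −i e^{−i(θ₁−Φ−θ₂)} + i e^{i(θ₁−Φ)}
      + (v • Emul 1 0 (blk (fun n => n = -1) (fun m => m ≤ -2) c)
        - v' • Emul (-1) 1 (blk (fun n => n = -1) (fun m => m ≤ -2) c))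
      -- K₂₂ = i e^{i(θ₁−Φ)}
      + v • Emul 1 0 (blk (fun n => n = -1) (fun m => m = -1) c)
      -- K₂₃ = i e^{i(θ₁−Φ+θ₂)}
      + v • Emul 1 1 (blk (fun n => n = -1) (fun m => m = 0) c)
      -- K₂₄ = −2 sin(θ₁−Φ+θ₂)
      + (v • Emul 1 1 (blk (fun n => n = -1) (fun m => 1 ≤ m) c)
        - v' • Emul (-1) (-1) (blk (fun n => n = -1) (fun m => 1 ≤ m) c))
      -- K₃₁ = −i e^{−i(θ₁−Φ)} + i e^{i(θ₁−Φ+θ₂)}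
      + (v • Emul 1 1 (blk (fun n => n = 0) (fun m => m ≤ -2) c)
        - v' • Emul (-1) 0 (blk (fun n => n = 0) (fun m => m ≤ -2) c))
      -- K₃₂ = i e^{−i(θ₁−Φ)}
      + v' • Emul (-1) 0 (blk (fun n => n = 0) (fun m => m = -1) c)
      -- K₃₃ = 0 ; K₃₄ = −i e^{−i(θ₁−Φ+θ₂)} + i e^{i(θ₁−Φ−θ₂)}
      + (v • Emul 1 (-1) (blk (fun n => n = 0) (fun m => 1 ≤ m) c)
        - v' • Emul (-1) (-1) (blk (fun n => n = 0) (fun m => 1 ≤ m) c))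
      -- K₄₁ = −2 sin(θ₁−Φ+θ₂)
      + (v • Emul 1 1 (blk (fun n => 1 ≤ n) (fun m => m ≤ -2) c)
        - v' • Emul (-1) (-1) (blk (fun n => 1 ≤ n) (fun m => m ≤ -2) c))
      -- K₄₂ = −i e^{−i(θ₁−Φ+θ₂)}
      - v' • Emul (-1) (-1) (blk (fun n => 1 ≤ n) (fun m => m = -1) c)
      -- K₄₃ = −i e^{−i(θ₁−Φ−θ₂)}
      - v' • Emul (-1) 1 (blk (fun n => 1 ≤ n) (fun m => m = 0) c)
      -- K₄₄ = −2 sin(θ₁−Φ−θ₂)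
      + (v • Emul 1 (-1) (blk (fun n => 1 ≤ n) (fun m => 1 ≤ m) c)
        - v' • Emul (-1) 1 (blk (fun n => 1 ≤ n) (fun m => 1 ≤ m) c)) )

/-- The Hilbert space `L²` of the two-torus, in its Fourier model `ℓ²(ℤ×ℤ)`. -/
abbrev HS : Type := lp (fun _ : ℤ × ℤ => ℂ) 2
namespace Stmt16Aux

/-- shift equivalence of the index set -/
def shiftE (a b : ℤ) : (ℤ × ℤ) ≃ (ℤ × ℤ) :=
  (Equiv.subRight a).prodCongr (Equiv.subRight b)

lemma shiftE_apply (a b : ℤ) (p : ℤ × ℤ) : shiftE a b p = (p.1 - a, p.2 - b) := rfl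

lemma norm_emulblk_le (a b : ℤ) (S T : ℤ → Prop) [DecidablePred S] [DecidablePred T]
    (c : Coef) (p : ℤ × ℤ) :
    ‖Emul a b (blk S T c) p‖ ≤ ‖c (shiftE a b p)‖ := by
  simp only [Emul, blk, shiftE_apply]
  split_ifs
  · exact le_refl _
  · simp

lemma memAux (a b : ℤ) (S T : ℤ → Prop) [DecidablePred S] [DecidablePred T] (ψ : HS) :
    Memℓp (Emul a b (blk S T ⇑ψ)) 2 := by
  apply memℓp_gen
  have hs : Summable fun p : ℤ × ℤ => ‖ψ p‖ ^ (2 : ENNReal).toReal :=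
    (lp.memℓp ψ).summable (by norm_num)
  have hs2 : Summable fun p : ℤ × ℤ => ‖ψ (shiftE a b p)‖ ^ (2 : ENNReal).toReal :=
    (Equiv.summable_iff (shiftE a b)).2 hs
  refine Summable.of_nonneg_of_le (fun p => Real.rpow_nonneg (norm_nonneg _) _) (fun p => ?_) hs2
  exact Real.rpow_le_rpow (norm_nonneg _) (norm_emulblk_le a b S T (⇑ψ) p)
    (ENNReal.toReal_nonneg)

def elemL (a b : ℤ) (S T : ℤ → Prop) [DecidablePred S] [DecidablePred T] : HS →L[ℂ] HS :=
  LinearMap.mkContinuous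
    { toFun := fun ψ => (⟨Emul a b (blk S T ⇑ψ), memAux a b S T ψ⟩ : HS)
      map_add' := fun ψ φ => by
        apply lp.ext
        funext p
        simp only [lp.coeFn_add, Pi.add_apply, Emul, blk]
        split_ifs <;> simp
      map_smul' := fun r ψ => by
        apply lp.ext
        funext p
        simp only [lp.coeFn_smul, Pi.smul_apply, Emul, blk, RingHom.id_apply, smul_eq_mul]
        split_ifs <;> simp }
    1
    (fun ψ => by
      rw [one_mul]
      apply lp.norm_le_of_forall_sum_le (p := 2) (by norm_num) (norm_nonneg ψ)
      intro s
      have hs : Summable fun p : ℤ × ℤ => ‖ψ p‖ ^ (2 : ENNReal).toReal :=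
        (lp.memℓp ψ).summable (by norm_num)
      calc ∑ p ∈ s, ‖Emul a b (blk S T ⇑ψ) p‖ ^ (2 : ENNReal).toReal
          ≤ ∑ p ∈ s, ‖ψ (shiftE a b p)‖ ^ (2 : ENNReal).toReal := by
            refine Finset.sum_le_sum fun p _ => ?_
            exact Real.rpow_le_rpow (norm_nonneg _) (norm_emulblk_le a b S T (⇑ψ) p)
              ENNReal.toReal_nonneg
        _ = ∑ q ∈ s.map (shiftE a b).toEmbedding, ‖ψ q‖ ^ (2 : ENNReal).toReal := by
            rw [Finset.sum_map]; rfl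
        _ ≤ ∑' q : ℤ × ℤ, ‖ψ q‖ ^ (2 : ENNReal).toReal :=
            Summable.sum_le_tsum _ (fun q _ => Real.rpow_nonneg (norm_nonneg _) _) hs
        _ = ‖ψ‖ ^ (2 : ENNReal).toReal := (lp.norm_rpow_eq_tsum (by norm_num) ψ).symm)

lemma elemL_apply (a b : ℤ) (S T : ℤ → Prop) [DecidablePred S] [DecidablePred T]
    (ψ : HS) (p : ℤ × ℤ) : elemL a b S T ψ p = Emul a b (blk S T ⇑ψ) p := rfl


/-- sum of all terms multiplied by `v = i e^{-iΦ}` -/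
def opA : HS →L[ℂ] HS :=
  elemL 1 (-1) (fun n => n ≤ -2) (fun m => m ≤ -2)
  + elemL 1 (-1) (fun n => n ≤ -2) (fun m => m = -1)
  + elemL 1 1 (fun n => n ≤ -2) (fun m => m = 0)
  + elemL 1 1 (fun n => n ≤ -2) (fun m => 1 ≤ m)
  + elemL 1 0 (fun n => n = -1) (fun m => m ≤ -2)
  + elemL 1 0 (fun n => n = -1) (fun m => m = -1)
  + elemL 1 1 (fun n => n = -1) (fun m => m = 0)
  + elemL 1 1 (fun n => n = -1) (fun m => 1 ≤ m)
  + elemL 1 1 (fun n => n = 0) (fun m => m ≤ -2)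
  + elemL 1 (-1) (fun n => n = 0) (fun m => 1 ≤ m)
  + elemL 1 1 (fun n => 1 ≤ n) (fun m => m ≤ -2)
  + elemL 1 (-1) (fun n => 1 ≤ n) (fun m => 1 ≤ m)

/-- (negative of) the sum of all terms multiplied by `v' = i e^{iΦ}` -/
def opB : HS →L[ℂ] HS :=
  elemL (-1) 1 (fun n => n ≤ -2) (fun m => m ≤ -2)
  + elemL (-1) (-1) (fun n => n ≤ -2) (fun m => 1 ≤ m)
  + elemL (-1) 1 (fun n => n = -1) (fun m => m ≤ -2)
  + elemL (-1) (-1) (fun n => n = -1) (fun m => 1 ≤ m)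
  + elemL (-1) 0 (fun n => n = 0) (fun m => m ≤ -2)
  + elemL (-1) (-1) (fun n => n = 0) (fun m => 1 ≤ m)
  + elemL (-1) (-1) (fun n => 1 ≤ n) (fun m => m ≤ -2)
  + elemL (-1) (-1) (fun n => 1 ≤ n) (fun m => m = -1)
  + elemL (-1) 1 (fun n => 1 ≤ n) (fun m => m = 0)
  + elemL (-1) 1 (fun n => 1 ≤ n) (fun m => 1 ≤ m)
  - elemL (-1) 0 (fun n => n = 0) (fun m => m = -1)

/-- the operator `I_{S¹}(Φ)` -/
def Jop (α Φ : ℝ) : HS →L[ℂ] HS :=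
  (-(α : ℂ)) • ((Complex.I * Complex.exp (-(Complex.I * (Φ : ℂ)))) • opA
    - (Complex.I * Complex.exp (Complex.I * (Φ : ℂ))) • opB)

lemma Top_apply (α Φ : ℝ) (ψ : HS) (p : ℤ × ℤ) : Jop α Φ ψ p = Icur α Φ (⇑ψ) p := by
  simp only [Jop, opA, opB, Icur, ContinuousLinearMap.smul_apply, ContinuousLinearMap.sub_apply,
    ContinuousLinearMap.add_apply, lp.coeFn_smul, lp.coeFn_sub, lp.coeFn_add, Pi.smul_apply,
    Pi.sub_apply, Pi.add_apply, smul_eq_mul, elemL_apply]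
  ring

lemma blk_zero (S T : ℤ → Prop) [DecidablePred S] [DecidablePred T] (c : Coef)
    (h : ∀ p : ℤ × ℤ, p ≠ (0, 0) → c p = 0) (h0 : ¬(S 0 ∧ T 0)) :
    blk S T c = fun _ => 0 := by
  funext p
  simp only [blk]
  split_ifs with hc
  · by_cases he : p = ((0 : ℤ), (0 : ℤ))
    · subst he; exact absurd hc h0
    · exact h p he
  · rfl

lemma Emul_zero (a b : ℤ) : Emul a b (fun _ => 0) = fun _ : ℤ × ℤ => (0 : ℂ) := rfl

lemma Icur_vanish (α Φ : ℝ) (c : Coef) (h : ∀ p : ℤ × ℤ, p ≠ (0, 0) → c p = 0) :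
    Icur α Φ c = fun _ => 0 := by
  simp only [Icur,
    blk_zero (fun n => n ≤ -2) (fun m => m ≤ -2) c h (by decide),
    blk_zero (fun n => n ≤ -2) (fun m => m = -1) c h (by decide),
    blk_zero (fun n => n ≤ -2) (fun m => m = 0) c h (by decide),
    blk_zero (fun n => n ≤ -2) (fun m => 1 ≤ m) c h (by decide),
    blk_zero (fun n => n = -1) (fun m => m ≤ -2) c h (by decide),
    blk_zero (fun n => n = -1) (fun m => m = -1) c h (by decide),
    blk_zero (fun n => n = -1) (fun m => m = 0) c h (by decide),
    blk_zero (fun n => n = -1) (fun m => 1 ≤ m) c h (by decide),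
    blk_zero (fun n => n = 0) (fun m => m ≤ -2) c h (by decide),
    blk_zero (fun n => n = 0) (fun m => m = -1) c h (by decide),
    blk_zero (fun n => n = 0) (fun m => 1 ≤ m) c h (by decide),
    blk_zero (fun n => 1 ≤ n) (fun m => m ≤ -2) c h (by decide),
    blk_zero (fun n => 1 ≤ n) (fun m => m = -1) c h (by decide),
    blk_zero (fun n => 1 ≤ n) (fun m => m = 0) c h (by decide),
    blk_zero (fun n => 1 ≤ n) (fun m => 1 ≤ m) c h (by decide),
    Emul_zero]
  funext p
  simp

end Stmt16Aux

/- STATEMENT 16: the Fraunhofer pattern.  The coordinate formula `Icur α Φ`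
defines a bounded operator `I_{S¹}(Φ)` on `H`, and for every `Ψ ≠ 0` and every
`ψ ∈ H` the total Josephson current is
`∫_{−1/2}^{1/2} ⟨ψ, I_{S¹}(Ψx)ψ⟩ dx = (sin(Ψ/2)/(Ψ/2)) ⟨ψ, I_{S¹}(0)ψ⟩`;
moreover it vanishes identically on the range of `P¹_{{0}}P²_{{0}}`. -/
open Stmt16Aux in
/-- the Fraunhofer pattern.  The coordinate formula `Icur α Φ`
defines a bounded operator `I_{S¹}(Φ)` on `H`, and for every `Ψ ≠ 0` and every
`ψ ∈ H` the total Josephson current is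
`∫_{−1/2}^{1/2} ⟨ψ, I_{S¹}(Ψx)ψ⟩ dx = (sin(Ψ/2)/(Ψ/2)) ⟨ψ, I_{S¹}(0)ψ⟩`;
moreover it vanishes identically on the range of `P¹_{{0}}P²_{{0}}`. -/
theorem stmt16 (α : ℝ) :
    ∃ T : ℝ → (HS →L[ℂ] HS),
      (∀ (Φ : ℝ) (ψ : HS) (p : ℤ × ℤ), T Φ ψ p = Icur α Φ (⇑ψ) p) ∧
      (∀ Ψ : ℝ, Ψ ≠ 0 → ∀ ψ : HS,
        (∫ x in (-(1 / 2) : ℝ)..(1 / 2 : ℝ), (inner (𝕜 := ℂ) ψ (T (Ψ * x) ψ)))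
          = ((Real.sin (Ψ / 2) / (Ψ / 2) : ℝ) : ℂ) * inner (𝕜 := ℂ) ψ (T 0 ψ)) ∧
      (∀ (Ψ : ℝ) (ψ : HS), (∀ p : ℤ × ℤ, p ≠ (0, 0) → ψ p = 0) →
        (∫ x in (-(1 / 2) : ℝ)..(1 / 2 : ℝ), (inner (𝕜 := ℂ) ψ (T (Ψ * x) ψ))) = 0) := by
  refine ⟨fun Φ => Jop α Φ, fun Φ ψ p => Top_apply α Φ ψ p, ?_, ?_⟩
  · intro Ψ hΨ ψ
    set a : ℂ := (-(α : ℂ)) * Complex.I * inner (𝕜 := ℂ) ψ (opA ψ) with ha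
    set b : ℂ := (α : ℂ) * Complex.I * inner (𝕜 := ℂ) ψ (opB ψ) with hb
    have hform : ∀ Φ : ℝ, (inner (𝕜 := ℂ) ψ (Jop α Φ ψ) : ℂ)
        = Complex.exp (-(Complex.I * (Φ : ℂ))) * a + Complex.exp (Complex.I * (Φ : ℂ)) * b := by
      intro Φ
      simp only [Jop, ContinuousLinearMap.smul_apply, ContinuousLinearMap.sub_apply,
        inner_smul_right, inner_sub_right, ha, hb]
      ring
    have hΨc : ((Ψ : ℂ)) ≠ 0 := Complex.ofReal_ne_zero.2 hΨ
    have hiΨ : (Complex.I * (Ψ : ℂ)) ≠ 0 := mul_ne_zero Complex.I_ne_zero hΨc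
    have hiΨ' : (-(Complex.I * (Ψ : ℂ))) ≠ 0 := neg_ne_zero.2 hiΨ
    have step1 : (∫ x in (-(1 / 2) : ℝ)..(1 / 2 : ℝ), (inner (𝕜 := ℂ) ψ (Jop α (Ψ * x) ψ)))
        = ∫ x in (-(1 / 2) : ℝ)..(1 / 2 : ℝ),
            (a * Complex.exp ((-(Complex.I * (Ψ : ℂ))) * (x : ℂ))
              + b * Complex.exp ((Complex.I * (Ψ : ℂ)) * (x : ℂ))) := by
      apply intervalIntegral.integral_congr
      intro x _
      simp only [hform]
      push_cast
      rw [show -(Complex.I * ((Ψ : ℂ) * (x : ℂ))) = (-(Complex.I * (Ψ : ℂ))) * (x : ℂ) by ring,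
          show Complex.I * ((Ψ : ℂ) * (x : ℂ)) = (Complex.I * (Ψ : ℂ)) * (x : ℂ) by ring]
      ring
    have int1 : IntervalIntegrable
        (fun x : ℝ => a * Complex.exp ((-(Complex.I * (Ψ : ℂ))) * (x : ℂ)))
        MeasureTheory.volume (-(1 / 2) : ℝ) (1 / 2 : ℝ) :=
      (continuous_const.mul (Complex.continuous_exp.comp
        (continuous_const.mul Complex.continuous_ofReal))).intervalIntegrable _ _
    have int2 : IntervalIntegrable
        (fun x : ℝ => b * Complex.exp ((Complex.I * (Ψ : ℂ)) * (x : ℂ)))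
        MeasureTheory.volume (-(1 / 2) : ℝ) (1 / 2 : ℝ) :=
      (continuous_const.mul (Complex.continuous_exp.comp
        (continuous_const.mul Complex.continuous_ofReal))).intervalIntegrable _ _
    rw [step1, intervalIntegral.integral_add int1 int2,
      intervalIntegral.integral_const_mul, intervalIntegral.integral_const_mul,
      integral_exp_mul_complex hiΨ', integral_exp_mul_complex hiΨ, hform 0]
    simp only [Complex.ofReal_zero, mul_zero, neg_zero, Complex.exp_zero, one_mul]
    rw [show (-(Complex.I * (Ψ : ℂ))) * (((1 : ℝ) / 2 : ℝ) : ℂ)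
          = -((Ψ : ℂ) / 2) * Complex.I by push_cast; ring,
        show (-(Complex.I * (Ψ : ℂ))) * (((-(1 / 2) : ℝ)) : ℂ)
          = ((Ψ : ℂ) / 2) * Complex.I by push_cast; ring,
        show (Complex.I * (Ψ : ℂ)) * (((1 : ℝ) / 2 : ℝ) : ℂ)
          = ((Ψ : ℂ) / 2) * Complex.I by push_cast; ring,
        show (Complex.I * (Ψ : ℂ)) * (((-(1 / 2) : ℝ)) : ℂ)
          = -((Ψ : ℂ) / 2) * Complex.I by push_cast; ring]
    have key : Complex.exp (-((Ψ : ℂ) / 2) * Complex.I) - Complex.exp (((Ψ : ℂ) / 2) * Complex.I)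
        = Complex.sin ((Ψ : ℂ) / 2) * 2 * (-Complex.I) := by
      rw [Complex.sin]
      linear_combination (Complex.exp (-((Ψ : ℂ) / 2) * Complex.I)
        - Complex.exp (((Ψ : ℂ) / 2) * Complex.I)) * Complex.I_sq
    have key2 : Complex.exp (((Ψ : ℂ) / 2) * Complex.I) - Complex.exp (-((Ψ : ℂ) / 2) * Complex.I)
        = Complex.sin ((Ψ : ℂ) / 2) * 2 * Complex.I := by
      linear_combination (-1 : ℂ) * key
    rw [key, key2]
    push_cast
    field_simp
  · intro Ψ ψ h
    have hz : ∀ x : ℝ, (inner (𝕜 := ℂ) ψ (Jop α (Ψ * x) ψ) : ℂ) = 0 := by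
      intro x
      have hT0 : Jop α (Ψ * x) ψ = 0 := by
        apply lp.ext
        funext p
        have h0 := congrFun (Icur_vanish α (Ψ * x) (⇑ψ) h) p
        have h1 := Top_apply α (Ψ * x) ψ p
        simp only [h1, h0, lp.coeFn_zero, Pi.zero_apply]
      rw [hT0, inner_zero_right]
    simp only [hz, intervalIntegral.integral_zero]
end
end
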